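/- (Rewriting of the discretized pressure gradient term.) Let c : Fin N → Fin N → E satisfy c j i = -c i j for all i, j and Σ_j c i j = 0 for every i. Then for all v : Fin N → E and p : Fin N → ℝ, Σ_i ⟪v i, Σ_j p j • c i j⟫ = Σ_{i < j} (p j + p i)·⟪c i j, v i - v j⟫. -/

import Mathlib

open scoped RealInnerProductSpace BigOperators

lemma pg_swap_aux {N : ℕ} (G : Fin N → Fin N → ℝ) :
    ∑ i, ∑ j ∈ Finset.univ.filter (fun j => j < i), G i j
      = ∑ i, ∑ j ∈ Finset.univ.filter (fun j => i < j), G j i := by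
  simp_rw [Finset.sum_filter]
  rw [Finset.sum_comm]

/-- Rewriting of the discretized pressure gradient term: for `c` with
`c j i = -c i j` and zero row sums,
`Σ_i ⟪v i, Σ_j p j • c i j⟫ = Σ_{i<j} (p j + p i)·⟪c i j, v i - v j⟫`. -/
theorem pressure_gradient_rewriting
    (d N : ℕ) (hd : 1 ≤ d) (hN : 1 ≤ N)
    (c : Fin N → Fin N → EuclideanSpace ℝ (Fin d))
    (hc_skew : ∀ i j, c j i = -c i j)
    (hc_rows : ∀ i, ∑ j, c i j = 0)
    (v : Fin N → EuclideanSpace ℝ (Fin d))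
    (p : Fin N → ℝ) :
    ∑ i, ⟪v i, ∑ j, p j • c i j⟫
      = ∑ i, ∑ j ∈ Finset.univ.filter (fun j => i < j),
          (p j + p i) * ⟪c i j, v i - v j⟫ := by
  classical
  have hdiag : ∀ i, c i i = 0 := by
    intro i
    have h := hc_skew i i
    have h2 : (2:ℝ) • c i i = 0 := by
      rw [two_smul]; nth_rewrite 2 [h]; simp
    rcases smul_eq_zero.mp h2 with h' | h'
    · norm_num at h'
    · exact h'
  set K : Fin N → Fin N → ℝ := fun i j => (p j + p i) * ⟪c i j, v i⟫ with hK
  have hKdiag : ∀ i, K i i = 0 := by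
    intro i; simp [hK, hdiag i]
  have hLHS : ∑ i, ⟪v i, ∑ j, p j • c i j⟫ = ∑ i, ∑ j, K i j := by
    have hz : ∀ i, ∑ j, p i * ⟪c i j, v i⟫ = 0 := by
      intro i
      rw [← Finset.mul_sum, ← sum_inner, hc_rows i]
      simp
    calc ∑ i, ⟪v i, ∑ j, p j • c i j⟫
        = ∑ i, ∑ j, p j * ⟪c i j, v i⟫ := by
          refine Finset.sum_congr rfl fun i _ => ?_
          rw [inner_sum]
          exact Finset.sum_congr rfl fun j _ => by
            rw [real_inner_smul_right, real_inner_comm]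
      _ = ∑ i, ((∑ j, p j * ⟪c i j, v i⟫) + ∑ j, p i * ⟪c i j, v i⟫) := by
          refine Finset.sum_congr rfl fun i _ => ?_
          rw [hz i, add_zero]
      _ = ∑ i, ∑ j, K i j := by
          refine Finset.sum_congr rfl fun i _ => ?_
          rw [← Finset.sum_add_distrib]
          refine Finset.sum_congr rfl fun j _ => ?_
          simp [hK]; ring
  rw [hLHS]
  -- split the double sum into i < j, j < i (diagonal is zero)
  have hsplit : ∀ i, ∑ j, K i j
      = ∑ j ∈ Finset.univ.filter (fun j => i < j), K i j
        + ∑ j ∈ Finset.univ.filter (fun j => j < i), K i j := by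
    intro i
    rw [← Finset.sum_filter_add_sum_filter_not Finset.univ (fun j => i < j)]
    congr 1
    refine (Finset.sum_subset ?_ ?_).symm
    · intro j hj
      simp only [Finset.mem_filter, Finset.mem_univ, true_and] at hj ⊢
      exact not_lt_of_gt hj
    · intro j hjm hj
      simp only [Finset.mem_filter, Finset.mem_univ, true_and, not_lt] at hjm hj
      have : j = i := le_antisymm hjm hj
      subst this; exact hKdiag j
  calc ∑ i, ∑ j, K i j
      = ∑ i, ∑ j ∈ Finset.univ.filter (fun j => i < j), K i j
        + ∑ i, ∑ j ∈ Finset.univ.filter (fun j => j < i), K i j := by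
        rw [← Finset.sum_add_distrib]; exact Finset.sum_congr rfl fun i _ => hsplit i
    _ = ∑ i, ∑ j ∈ Finset.univ.filter (fun j => i < j), (K i j + K j i) := by
        rw [pg_swap_aux, ← Finset.sum_add_distrib]
        refine Finset.sum_congr rfl fun i _ => ?_
        rw [← Finset.sum_add_distrib]
    _ = ∑ i, ∑ j ∈ Finset.univ.filter (fun j => i < j),
          (p j + p i) * ⟪c i j, v i - v j⟫ := by
        refine Finset.sum_congr rfl fun i _ => Finset.sum_congr rfl fun j _ => ?_
        simp only [hK, hc_skew i j, inner_sub_right, inner_neg_left]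
        ring
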